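/- In the group algebra R = 𝔽₂[ℤ³], the element P = T₁T₂T₃ + T₁T₂⁻¹T₃⁻¹ + T₁⁻¹T₂T₃⁻¹ + T₁⁻¹T₂⁻¹T₃ is nonzero and lies in the fourth power m⁴ of the augmentation ideal m = ker(ε), where ε : R → 𝔽₂ is the augmentation homomorphism sending each T_i to 1. -/

import Mathlib

/-- The group algebra `R = 𝔽₂[ℤ³]`. -/
abbrev GroupAlgZ3 : Type := AddMonoidAlgebra (ZMod 2) (Fin 3 → ℤ)

/-- The invertible generator `T_i` of `𝔽₂[ℤ³]`, the image of the `i`-th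
standard basis vector of `ℤ³`. -/
noncomputable def Tgen (i : Fin 3) : GroupAlgZ3 :=
  AddMonoidAlgebra.single (Pi.single i (1 : ℤ)) 1

/-- The inverse `T_i⁻¹`. -/
noncomputable def TgenInv (i : Fin 3) : GroupAlgZ3 :=
  AddMonoidAlgebra.single (Pi.single i (-1 : ℤ)) 1

/-- The augmentation homomorphism `ε : 𝔽₂[ℤ³] → 𝔽₂` sending every group
element (in particular each `T_i`) to `1`. -/
noncomputable def augEps : GroupAlgZ3 →ₐ[ZMod 2] ZMod 2 :=
  AddMonoidAlgebra.lift (ZMod 2) (ZMod 2) (Fin 3 → ℤ) 1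

lemma tgen_mul_inv (i : Fin 3) : Tgen i * TgenInv i = 1 := by
  simp [Tgen, TgenInv, AddMonoidAlgebra.single_mul_single, ← Pi.single_add,
    AddMonoidAlgebra.one_def]

lemma two_eq_zero : (2 : GroupAlgZ3) = 0 := by
  rw [show (2:GroupAlgZ3) = algebraMap (ZMod 2) _ 2 from (map_ofNat _ 2).symm]
  simp [show (2:ZMod 2) = 0 from rfl]

lemma mem_ker (i : Fin 3) :
    Tgen i + 1 ∈ RingHom.ker (augEps : GroupAlgZ3 →+* ZMod 2) := by
  rw [RingHom.mem_ker]
  have : (augEps : GroupAlgZ3 →+* ZMod 2) (Tgen i) = 1 := by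
    simp [augEps, Tgen, AddMonoidAlgebra.lift_single]
  rw [map_add, this, map_one]
  decide

/-- the element
`P = T₁T₂T₃ + T₁T₂⁻¹T₃⁻¹ + T₁⁻¹T₂T₃⁻¹ + T₁⁻¹T₂⁻¹T₃` of `𝔽₂[ℤ³]` is nonzero
and lies in the fourth power of the augmentation ideal `m = ker ε`. -/
theorem stmt11 :
    (Tgen 0 * Tgen 1 * Tgen 2 + Tgen 0 * TgenInv 1 * TgenInv 2 +
        TgenInv 0 * Tgen 1 * TgenInv 2 + TgenInv 0 * TgenInv 1 * Tgen 2) ≠ 0 ∧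
    (Tgen 0 * Tgen 1 * Tgen 2 + Tgen 0 * TgenInv 1 * TgenInv 2 +
        TgenInv 0 * Tgen 1 * TgenInv 2 + TgenInv 0 * TgenInv 1 * Tgen 2) ∈
      (RingHom.ker (augEps : GroupAlgZ3 →+* ZMod 2)) ^ 4 := by
  constructor
  · intro h
    simp only [Tgen, TgenInv, AddMonoidAlgebra.single_mul_single, one_mul] at h
    have h2 := congrArg (fun x : GroupAlgZ3 => x.coeff (fun _ => (1:ℤ))) h
    simp only [AddMonoidAlgebra.coeff_add, AddMonoidAlgebra.coeff_zero] at h2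
    rw [Finsupp.add_apply, Finsupp.add_apply, Finsupp.add_apply] at h2
    simp only [AddMonoidAlgebra.coeff_single, Finsupp.single_apply, Finsupp.coe_zero,
      Pi.zero_apply] at h2
    rw [if_pos (by funext j; fin_cases j <;> simp),
      if_neg (by intro hc; have := congrFun hc 1; simp at this),
      if_neg (by intro hc; have := congrFun hc 0; simp at this),
      if_neg (by intro hc; have := congrFun hc 0; simp at this)] at h2
    simp at h2
  · set I := RingHom.ker (augEps : GroupAlgZ3 →+* ZMod 2) with hI
    set T0 := Tgen 0; set T1 := Tgen 1; set T2 := Tgen 2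
    set U0 := TgenInv 0; set U1 := TgenInv 1; set U2 := TgenInv 2
    have h0 : T0 * U0 = 1 := tgen_mul_inv 0
    have h1 : T1 * U1 = 1 := tgen_mul_inv 1
    have h2 : T2 * U2 = 1 := tgen_mul_inv 2
    have htwo : (2 : GroupAlgZ3) = 0 := two_eq_zero
    have ha : T0 + 1 ∈ I := mem_ker 0
    have hb : T1 + 1 ∈ I := mem_ker 1
    have hc : T2 + 1 ∈ I := mem_ker 2
    set a := T0 + 1; set b := T1 + 1; set c := T2 + 1
    set S := a * b + a * c + b * c + a * b * c with hSdef
    have hS : S ∈ I ^ 2 := by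
      rw [sq]
      exact add_mem (add_mem (add_mem (Ideal.mul_mem_mul ha hb)
        (Ideal.mul_mem_mul ha hc)) (Ideal.mul_mem_mul hb hc))
        (Ideal.mul_mem_right c _ (Ideal.mul_mem_mul ha hb))
    have hS2 : S ^ 2 ∈ I ^ 4 := by
      rw [show (4:ℕ) = 2 * 2 from rfl, pow_mul]
      exact Ideal.pow_mem_pow hS 2
    set P := T0 * T1 * T2 + T0 * U1 * U2 + U0 * T1 * U2 + U0 * U1 * T2 with hPdef
    have hQ : T0 * T1 * T2 * P = S ^ 2 := by
      rw [hPdef, hSdef]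
      linear_combination (T1*T2^2*U1 + T1^2*T2*U2) * h0 + (T2^2 + T0^2*T2*U2) * h1 +
        (T1^2 + T0^2) * h2 +
        (-8 - 12*T2 - 4*T2^2 - 12*T1 - 17*T1*T2 - 6*T1*T2^2 - 4*T1^2 - 6*T1^2*T2
          - 2*T1^2*T2^2 - 12*T0 - 17*T0*T2 - 6*T0*T2^2 - 17*T0*T1 - 22*T0*T1*T2
          - 7*T0*T1*T2^2 - 6*T0*T1^2 - 7*T0*T1^2*T2 - 2*T0*T1^2*T2^2 - 4*T0^2
          - 6*T0^2*T2 - 2*T0^2*T2^2 - 6*T0^2*T1 - 7*T0^2*T1*T2 - 2*T0^2*T1*T2^2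
          - 2*T0^2*T1^2 - 2*T0^2*T1^2*T2) * htwo
    have hP : P = (U0 * U1 * U2) * (S ^ 2) := by
      rw [← hQ]
      linear_combination (-(P*T0*U0*T1*U1)) * h2 + (-(P*T0*U0)) * h1 + (-P) * h0
    rw [hP]
    exact Ideal.mul_mem_left _ _ hS2
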